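/- Let V, P be finite-dimensional real inner product spaces, K_Ω : V → V and K_Γ : P → P symmetric positive semidefinite, B : V → P linear, ε, δ, κ, σ, τ > 0, and W₊, W₋ : V → ℝ, G₊, G₋ : P → ℝ convex differentiable. Suppose uⁿ, uⁿ⁺¹, wⁿ⁺¹ ∈ V, pⁿ, pⁿ⁺¹, w_Γⁿ⁺¹, λⁿ⁺¹ ∈ P satisfy: (i) uⁿ⁺¹ + τσ K_Ω wⁿ⁺¹ = uⁿ; (ii) ε K_Ω uⁿ⁺¹ + ε⁻¹(∇W₊(uⁿ⁺¹) − ∇W₋(uⁿ)) − ε B*λⁿ⁺¹ = wⁿ⁺¹; (iii) pⁿ⁺¹ + τ K_Γ w_Γⁿ⁺¹ = pⁿ; (iv) δκ K_Γ pⁿ⁺¹ + δ⁻¹(∇G₊(pⁿ⁺¹) − ∇G₋(pⁿ)) + ε λⁿ⁺¹ = w_Γⁿ⁺¹; (v) B uⁿ = pⁿ and B uⁿ⁺¹ = pⁿ⁺¹. Then the total energy E(u,p) = (ε/2)⟨K_Ω u, u⟩ + ε⁻¹(W₊(u) − W₋(u)) + (δκ/2)⟨K_Γ p, p⟩ + δ⁻¹(G₊(p)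 − G₋(p)) satisfies E(uⁿ⁺¹, pⁿ⁺¹) ≤ E(uⁿ, pⁿ). -/

import Mathlib

open scoped RealInnerProductSpace

lemma grad_ineq {V : Type*} [NormedAddCommGroup V] [InnerProductSpace ℝ V] [CompleteSpace V]
    {f : V → ℝ} {g : V → V} (hf : ConvexOn ℝ Set.univ f)
    (hg : ∀ x, HasGradientAt f (g x) x) (x y : V) :
    ⟪g x, y - x⟫ ≤ f y - f x := by
  set φ : ℝ → ℝ := fun t => f (x + t • (y - x)) with hφ
  have hcurve : HasDerivAt (fun s : ℝ => x + s • (y - x)) (y - x) (0 : ℝ) := by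
    simpa using ((hasDerivAt_id (0:ℝ)).smul_const (y - x)).const_add x
  have hd : HasDerivAt φ ⟪g x, y - x⟫ 0 := by
    have h0 : HasFDerivAt f (InnerProductSpace.toDual ℝ V (g x)) x := hg x
    have h0' : HasFDerivAt f (InnerProductSpace.toDual ℝ V (g x))
        (x + (0:ℝ) • (y - x)) := by simpa using h0
    have := h0'.comp_hasDerivAt (0:ℝ) hcurve
    simp only [InnerProductSpace.toDual_apply_apply] at this; exact this
  have hφconv : ConvexOn ℝ Set.univ φ := by
    have := hf.comp_affineMap (AffineMap.lineMap x y : ℝ →ᵃ[ℝ] V)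
    have heq : (f ∘ (AffineMap.lineMap x y : ℝ →ᵃ[ℝ] V)) = φ := by
      funext t
      simp [hφ, AffineMap.lineMap_apply, add_comm]
    rw [heq] at this
    simpa using this
  have hs := hφconv.le_slope_of_hasDerivAt (Set.mem_univ (0:ℝ)) (Set.mem_univ (1:ℝ))
    zero_lt_one hd
  have : slope φ 0 1 = f y - f x := by
    simp [slope_def_field, hφ]
  linarith [hs, this.symm ▸ hs, this ▸ hs]

set_option maxHeartbeats 1000000 in
theorem stmt_9 {V P : Type*} [NormedAddCommGroup V] [InnerProductSpace ℝ V]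
    [FiniteDimensional ℝ V] [NormedAddCommGroup P] [InnerProductSpace ℝ P]
    [FiniteDimensional ℝ P]
    (KΩ : V →ₗ[ℝ] V) (KΓ : P →ₗ[ℝ] P) (B : V →ₗ[ℝ] P)
    (hKΩsym : ∀ x y : V, ⟪KΩ x, y⟫ = ⟪x, KΩ y⟫)
    (hKΩpos : ∀ v : V, 0 ≤ ⟪KΩ v, v⟫)
    (hKΓsym : ∀ x y : P, ⟪KΓ x, y⟫ = ⟪x, KΓ y⟫)
    (hKΓpos : ∀ q : P, 0 ≤ ⟪KΓ q, q⟫)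
    (ε δ κ σ τ : ℝ) (hε : 0 < ε) (hδ : 0 < δ) (hκ : 0 < κ) (hσ : 0 < σ) (hτ : 0 < τ)
    (Wp Wm : V → ℝ) (gWp gWm : V → V)
    (Gp Gm : P → ℝ) (gGp gGm : P → P)
    (hWpconv : ConvexOn ℝ Set.univ Wp) (hWmconv : ConvexOn ℝ Set.univ Wm)
    (hGpconv : ConvexOn ℝ Set.univ Gp) (hGmconv : ConvexOn ℝ Set.univ Gm)
    (hWp : ∀ x, HasGradientAt Wp (gWp x) x)
    (hWm : ∀ x, HasGradientAt Wm (gWm x) x)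
    (hGp : ∀ x, HasGradientAt Gp (gGp x) x)
    (hGm : ∀ x, HasGradientAt Gm (gGm x) x)
    (E : V → P → ℝ)
    (hE : ∀ u p, E u p = (ε/2) * ⟪KΩ u, u⟫ + ε⁻¹ * (Wp u - Wm u)
      + (δ * κ / 2) * ⟪KΓ p, p⟫ + δ⁻¹ * (Gp p - Gm p))
    (u0 u1 w1 : V) (p0 p1 wΓ1 lam : P)
    (h1 : u1 + (τ * σ) • KΩ w1 = u0)
    (h2 : ε • KΩ u1 + ε⁻¹ • (gWp u1 - gWm u0) - ε • (LinearMap.adjoint B) lam = w1)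
    (h3 : p1 + τ • KΓ wΓ1 = p0)
    (h4 : (δ * κ) • KΓ p1 + δ⁻¹ • (gGp p1 - gGm p0) + ε • lam = wΓ1)
    (h5 : B u0 = p0) (h6 : B u1 = p1) :
    E u1 p1 ≤ E u0 p0 := by
  set a := u1 - u0 with ha
  set b := p1 - p0 with hb
  -- dissipation of the flow
  have hua : a = -((τ * σ) • KΩ w1) := by rw [ha, ← h1]; abel
  have hpb : b = -(τ • KΓ wΓ1) := by rw [hb, ← h3]; abel
  have hw1a : ⟪w1, a⟫ = -((τ * σ) * ⟪KΩ w1, w1⟫) := by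
    rw [hua, inner_neg_right, real_inner_smul_right, real_inner_comm]
  have hwΓb : ⟪wΓ1, b⟫ = -(τ * ⟪KΓ wΓ1, wΓ1⟫) := by
    rw [hpb, inner_neg_right, real_inner_smul_right, real_inner_comm]
  have hBa : B a = b := by rw [ha, hb, map_sub, h5, h6]
  -- expand ⟪w1, a⟫ via h2
  have hw1a' : ⟪w1, a⟫ = ε * ⟪KΩ u1, a⟫ + ε⁻¹ * ⟪gWp u1 - gWm u0, a⟫ - ε * ⟪lam, b⟫ := by
    rw [← h2]
    simp only [inner_sub_left, inner_add_left, real_inner_smul_left,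
      LinearMap.adjoint_inner_left, hBa]
  have hwΓb' : ⟪wΓ1, b⟫ = (δ * κ) * ⟪KΓ p1, b⟫ + δ⁻¹ * ⟪gGp p1 - gGm p0, b⟫ + ε * ⟪lam, b⟫ := by
    rw [← h4]
    simp only [inner_add_left, real_inner_smul_left]
  have hkey : ε * ⟪KΩ u1, a⟫ + ε⁻¹ * ⟪gWp u1 - gWm u0, a⟫
      + (δ * κ) * ⟪KΓ p1, b⟫ + δ⁻¹ * ⟪gGp p1 - gGm p0, b⟫ ≤ 0 := by
    have h1' : ⟪w1, a⟫ ≤ 0 := by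
      rw [hw1a]
      have := mul_nonneg (mul_pos hτ hσ).le (hKΩpos w1)
      linarith
    have h2' : ⟪wΓ1, b⟫ ≤ 0 := by
      rw [hwΓb]
      have := mul_nonneg hτ.le (hKΓpos wΓ1)
      linarith
    linarith [hw1a', hwΓb']
  -- quadratic estimates
  have hquadV : ⟪KΩ u1, u1⟫ - ⟪KΩ u0, u0⟫ ≤ 2 * ⟪KΩ u1, a⟫ := by
    have hexp : ⟪KΩ a, a⟫ = ⟪KΩ u1, u1⟫ - 2 * ⟪KΩ u1, u0⟫ + ⟪KΩ u0, u0⟫ := by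
      rw [ha]
      simp only [map_sub, inner_sub_left, inner_sub_right]
      have : ⟪KΩ u0, u1⟫ = ⟪KΩ u1, u0⟫ := by
        rw [hKΩsym u0 u1, real_inner_comm]
      linarith [this]
    have h2a : ⟪KΩ u1, a⟫ = ⟪KΩ u1, u1⟫ - ⟪KΩ u1, u0⟫ := by
      rw [ha, inner_sub_right]
    linarith [hKΩpos a]
  have hquadP : ⟪KΓ p1, p1⟫ - ⟪KΓ p0, p0⟫ ≤ 2 * ⟪KΓ p1, b⟫ := by
    have hexp : ⟪KΓ b, b⟫ = ⟪KΓ p1, p1⟫ - 2 * ⟪KΓ p1, p0⟫ + ⟪KΓ p0, p0⟫ := by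
      rw [hb]
      simp only [map_sub, inner_sub_left, inner_sub_right]
      have : ⟪KΓ p0, p1⟫ = ⟪KΓ p1, p0⟫ := by
        rw [hKΓsym p0 p1, real_inner_comm]
      linarith [this]
    have h2b : ⟪KΓ p1, b⟫ = ⟪KΓ p1, p1⟫ - ⟪KΓ p1, p0⟫ := by
      rw [hb, inner_sub_right]
    linarith [hKΓpos b]
  -- convexity estimates
  have hW1 : Wp u1 - Wp u0 ≤ ⟪gWp u1, a⟫ := by
    have := grad_ineq hWpconv hWp u1 u0
    have hneg : ⟪gWp u1, u0 - u1⟫ = -⟪gWp u1, a⟫ := by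
      rw [ha, ← inner_neg_right]; congr 1; abel
    linarith [hneg ▸ this]
  have hW2 : ⟪gWm u0, a⟫ ≤ Wm u1 - Wm u0 := by
    have := grad_ineq hWmconv hWm u0 u1
    rw [ha]; exact this
  have hG1 : Gp p1 - Gp p0 ≤ ⟪gGp p1, b⟫ := by
    have := grad_ineq hGpconv hGp p1 p0
    have hneg : ⟪gGp p1, p0 - p1⟫ = -⟪gGp p1, b⟫ := by
      rw [hb, ← inner_neg_right]; congr 1; abel
    linarith [hneg ▸ this]
  have hG2 : ⟪gGm p0, b⟫ ≤ Gm p1 - Gm p0 := by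
    have := grad_ineq hGmconv hGm p0 p1
    rw [hb]; exact this
  have hWsub : ⟪gWp u1 - gWm u0, a⟫ = ⟪gWp u1, a⟫ - ⟪gWm u0, a⟫ := inner_sub_left _ _ _
  have hGsub : ⟪gGp p1 - gGm p0, b⟫ = ⟪gGp p1, b⟫ - ⟪gGm p0, b⟫ := inner_sub_left _ _ _
  rw [hE, hE]
  have hεinv : (0:ℝ) < ε⁻¹ := inv_pos.mpr hε
  have hδinv : (0:ℝ) < δ⁻¹ := inv_pos.mpr hδ
  have hWineq : ε⁻¹ * ((Wp u1 - Wm u1) - (Wp u0 - Wm u0)) ≤ ε⁻¹ * ⟪gWp u1 - gWm u0, a⟫ := by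
    rw [hWsub]
    apply mul_le_mul_of_nonneg_left _ hεinv.le
    linarith
  have hGineq : δ⁻¹ * ((Gp p1 - Gm p1) - (Gp p0 - Gm p0)) ≤ δ⁻¹ * ⟪gGp p1 - gGm p0, b⟫ := by
    rw [hGsub]
    apply mul_le_mul_of_nonneg_left _ hδinv.le
    linarith
  have hA : (ε/2) * (⟪KΩ u1, u1⟫ - ⟪KΩ u0, u0⟫) ≤ ε * ⟪KΩ u1, a⟫ := by
    have h := mul_le_mul_of_nonneg_left hquadV (by positivity : (0:ℝ) ≤ ε/2)
    have h' : (ε/2) * (2 * ⟪KΩ u1, a⟫) = ε * ⟪KΩ u1, a⟫ := by ring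
    linarith
  have hC : (δ * κ / 2) * (⟪KΓ p1, p1⟫ - ⟪KΓ p0, p0⟫) ≤ (δ * κ) * ⟪KΓ p1, b⟫ := by
    have h := mul_le_mul_of_nonneg_left hquadP
      (by positivity : (0:ℝ) ≤ δ * κ / 2)
    have h' : (δ * κ / 2) * (2 * ⟪KΓ p1, b⟫) = (δ * κ) * ⟪KΓ p1, b⟫ := by ring
    linarith
  nlinarith [hkey, hA, hC, hWineq, hGineq]
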